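/- Let X = ℕ × {−1, 0, +1} with points x_n^+ = (n,+1), x_n^- = (n,−1), z_n = (n,0); let U(x_n^+) = {x_n^+, z_n}, U(x_n^-) = {x_n^-, z_n}, U(z_n) = {z_n, x_n^+, x_n^-}; and for y : ℕ → {−1,+1} let h_y : X → {−1,+1} be given by h_y(x_n^+) = +1, h_y(x_n^-) = −1, h_y(z_n) = y(n), with C = {h_y : y ∈ {−1,+1}^ℕ}. Then: (a) letting μ be the i.i.d. uniform product measure on {−1,+1}^ℕ, for every y ∈ {−1,+1}^ℕ and every probability measure D on X robustly realizable by h_y w.r.t. U, every ỹ ∈ {−1,+1}^ℕ satisfies D{x : h_ỹ(x) ≠ h_y(x)} = 0, and ∫ D(Rob_U(h_ỹ)) dμ(ỹ) = 1/2; and (b) for every ε ∈ (0, 1/2), δ ∈ (0, 1/2), m ∈ ℕ, and every learner B with sample complexity m, there exist y ∈ {−1,+1}^ℕ and a probability measure D on X robustly realizable by h_y w.r.t. U such that with probability strictly greater than δ over S ~ D_{h_y}^m, R_U(B(S); D, h_y) > ε. In particular, C is barely robustly learnable with respect to U (with β = 1/2 and zero natural error, in expectation over the learner's randomness) but not (ε,δ)-robustly-learnable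 with respect to U for any ε < 1/2. -/

import Mathlib

open MeasureTheory

instance : MeasurableSpace SignType := ⊤
instance : MeasurableSpace ℤˣ := ⊤

/-- The instance space `X = ℕ × {−1, 0, +1}`, with second coordinate formalized by `SignType`
(`.neg ↔ −1`, `.zero ↔ 0`, `.pos ↔ +1`). Binary labels are formalized as `ℤˣ = {−1,+1}`. -/
abbrev Xsp : Type := ℕ × SignType

/-- `x_n^+ = (n, +1)`. -/
def xp (n : ℕ) : Xsp := (n, SignType.pos)

/-- `x_n^- = (n, −1)`. -/
def xm (n : ℕ) : Xsp := (n, SignType.neg)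

/-- `z_n = (n, 0)`. -/
def zz (n : ℕ) : Xsp := (n, SignType.zero)

/-- The perturbation set: `U(x_n^±) = {x_n^±, z_n}` and `U(z_n) = {z_n, x_n^+, x_n^-}`. -/
def Upert : Xsp → Set Xsp := fun p =>
  match p with
  | (n, SignType.pos) => {xp n, zz n}
  | (n, SignType.neg) => {xm n, zz n}
  | (n, SignType.zero) => {zz n, xp n, xm n}

/-- The concept `h_y` for `y : ℕ → ℤˣ`: `h_y(x_n^+) = +1`, `h_y(x_n^-) = −1`,
`h_y(z_n) = y(n)`. -/
def hy (y : ℕ → ℤˣ) : Xsp → ℤˣ := fun p =>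
  match p with
  | (_, SignType.pos) => 1
  | (_, SignType.neg) => -1
  | (n, SignType.zero) => y n

/-- `x_n^{u}` for a sign `u : ℤˣ`: `x_n^{+1} = x_n^+` and `x_n^{−1} = x_n^-`. -/
def xpt (n : ℕ) (u : ℤˣ) : Xsp := if u = 1 then xp n else xm n

/-- Robust region of a classifier `h` w.r.t. a perturbation set `V`. -/
def Rob {X Y : Type*} (V : X → Set X) (h : X → Y) : Set X := {x | ∀ z ∈ V x, h z = h x}

instance : MeasurableSingletonClass SignType := ⟨fun _ => MeasurableSpace.measurableSet_top⟩
instance : MeasurableSingletonClass ℤˣ := ⟨fun _ => MeasurableSpace.measurableSet_top⟩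

@[simp] lemma hy_xp (y : ℕ → ℤˣ) (n : ℕ) : hy y (xp n) = 1 := rfl
@[simp] lemma hy_xm (y : ℕ → ℤˣ) (n : ℕ) : hy y (xm n) = -1 := rfl
@[simp] lemma hy_zz (y : ℕ → ℤˣ) (n : ℕ) : hy y (zz n) = y n := rfl
@[simp] lemma Upert_xp (n : ℕ) : Upert (xp n) = {xp n, zz n} := rfl
@[simp] lemma Upert_xm (n : ℕ) : Upert (xm n) = {xm n, zz n} := rfl
@[simp] lemma Upert_zz (n : ℕ) : Upert (zz n) = {zz n, xp n, xm n} := rfl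

lemma hy_xpt (y : ℕ → ℤˣ) (n : ℕ) (u : ℤˣ) : hy y (xpt n u) = u := by
  rcases Int.units_eq_one_or u with h | h <;> simp [xpt, h]

lemma zz_mem_bad (y : ℕ → ℤˣ) (n : ℕ) :
    zz n ∈ {x : Xsp | ∃ z ∈ Upert x, hy y z ≠ hy y x} := by
  rcases Int.units_eq_one_or (y n) with h | h
  · exact ⟨xm n, by simp, by simp [h]⟩
  · exact ⟨xp n, by simp, by simp [h]⟩

lemma mem_Rob_iff (y' : ℕ → ℤˣ) (x : Xsp) :
    x ∈ Rob Upert (hy y') ↔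
      ((x.2 = SignType.pos ∧ y' x.1 = 1) ∨ (x.2 = SignType.neg ∧ y' x.1 = -1)) := by
  obtain ⟨n, s⟩ := x
  cases s
  · -- zero
    constructor
    · intro h
      exfalso
      have h1 := h (xp n) (show xp n ∈ Upert (zz n) by simp)
      have h2 := h (xm n) (show xm n ∈ Upert (zz n) by simp)
      rw [show ((n, SignType.zero) : Xsp) = zz n from rfl] at h1 h2
      simp at h1 h2
      rw [← h1] at h2
      exact absurd h2 (by decide)
    · rintro (⟨h, -⟩ | ⟨h, -⟩) <;> simp at h
  · -- neg
    rw [show ((n, SignType.neg) : Xsp) = xm n from rfl]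
    constructor
    · intro h
      exact Or.inr ⟨rfl, by have := h (zz n) (by simp); simp only [hy_zz, hy_xm] at this; exact this⟩
    · rintro (⟨h, -⟩ | ⟨-, h⟩)
      · simp [xm] at h
      · rintro z hz
        simp only [Upert_xm, Set.mem_insert_iff, Set.mem_singleton_iff] at hz
        rcases hz with rfl | rfl
        · rfl
        · simp only [hy_zz, hy_xm]
          simpa [xm] using h
  · -- pos
    rw [show ((n, SignType.pos) : Xsp) = xp n from rfl]
    constructor
    · intro h
      exact Or.inl ⟨rfl, by have := h (zz n) (by simp); simp only [hy_zz, hy_xp] at this; exact this⟩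
    · rintro (⟨-, h⟩ | ⟨h, -⟩)
      · rintro z hz
        simp only [Upert_xp, Set.mem_insert_iff, Set.mem_singleton_iff] at hz
        rcases hz with rfl | rfl
        · rfl
        · simp only [hy_zz, hy_xp]
          simpa [xp] using h
      · simp [xp] at h

lemma zero_sec_null (y : ℕ → ℤˣ) (D : Measure Xsp)
    (hreal : D {x | ∃ z ∈ Upert x, hy y z ≠ hy y x} = 0) :
    D {x : Xsp | x.2 = SignType.zero} = 0 := by
  refine measure_mono_null ?_ hreal
  rintro ⟨n, s⟩ hs
  simp only [Set.mem_setOf_eq] at hs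
  subst hs
  exact zz_mem_bad y n

lemma partA (μ : Measure (ℕ → ℤˣ)) [IsProbabilityMeasure μ]
    (hμ : ∀ (s : Finset ℕ) (v : ℕ → ℤˣ),
      μ {y' | ∀ n ∈ s, y' n = v n} = (2 : ENNReal)⁻¹ ^ s.card)
    (y : ℕ → ℤˣ) (D : Measure Xsp) [IsProbabilityMeasure D]
    (hreal : D {x | ∃ z ∈ Upert x, hy y z ≠ hy y x} = 0) :
    (∀ y' : ℕ → ℤˣ, D {x | hy y' x ≠ hy y x} = 0) ∧
      ∫⁻ y', D (Rob Upert (hy y')) ∂μ = 1 / 2 := by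
  have hzero := zero_sec_null y D hreal
  constructor
  · intro y'
    refine measure_mono_null ?_ hzero
    rintro ⟨n, s⟩ hs
    simp only [Set.mem_setOf_eq] at hs ⊢
    cases s
    · rfl
    · exact absurd rfl hs
    · exact absurd rfl hs
  · -- the lintegral computation
    set W : Set ((ℕ → ℤˣ) × Xsp) := {p | p.2 ∈ Rob Upert (hy p.1)} with hW
    have hWeq : W = ⋃ n : ℕ, (((fun y' : ℕ → ℤˣ => y' n) ⁻¹' {1}) ×ˢ ({xp n} : Set Xsp)) ∪
        (((fun y' : ℕ → ℤˣ => y' n) ⁻¹' {-1}) ×ˢ ({xm n} : Set Xsp)) := by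
      ext ⟨y', x⟩
      simp only [hW, Set.mem_setOf_eq, mem_Rob_iff, Set.mem_iUnion, Set.mem_union,
        Set.mem_prod, Set.mem_preimage, Set.mem_singleton_iff]
      obtain ⟨n, s⟩ := x
      cases s <;> simp [xp, xm, Prod.ext_iff]
    have hWm : MeasurableSet W := by
      rw [hWeq]
      refine MeasurableSet.iUnion fun n => MeasurableSet.union ?_ ?_
      · exact ((measurable_pi_apply n) (measurableSet_singleton 1)).prod
          (measurableSet_singleton _)
      · exact ((measurable_pi_apply n) (measurableSet_singleton (-1))).prod
          (measurableSet_singleton _)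
    have hmslice : ∀ x : Xsp, MeasurableSet {y' : ℕ → ℤˣ | (y', x) ∈ W} := fun x =>
      hWm.preimage measurable_prodMk_right
    have hslice : ∀ x : Xsp,
        μ {y' | (y', x) ∈ W} = if x.2 = SignType.zero then 0 else 2⁻¹ := by
      rintro ⟨n, s⟩
      cases s
      · have h0 : {y' : ℕ → ℤˣ | (y', ((n, SignType.zero) : Xsp)) ∈ W} = ∅ := by
          ext y'; simp [hW, mem_Rob_iff]
        rw [h0]; simp
      · have hset : {y' : ℕ → ℤˣ | (y', ((n, SignType.neg) : Xsp)) ∈ W}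
            = {y' | ∀ k ∈ ({n} : Finset ℕ), y' k = (fun _ => (-1 : ℤˣ)) k} := by
          ext y'; simp [hW, mem_Rob_iff]
        rw [hset, hμ]
        simp
      · have hset : {y' : ℕ → ℤˣ | (y', ((n, SignType.pos) : Xsp)) ∈ W}
            = {y' | ∀ k ∈ ({n} : Finset ℕ), y' k = (fun _ => (1 : ℤˣ)) k} := by
          ext y'; simp [hW, mem_Rob_iff]
        rw [hset, hμ]
        simp
    have hind : ∀ (y' : ℕ → ℤˣ) (x : Xsp), W.indicator (1 : ((ℕ → ℤˣ) × Xsp) → ENNReal) (y', x) =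
        {y'' : ℕ → ℤˣ | (y'', x) ∈ W}.indicator 1 y' := by
      intro y' x
      rfl
    calc ∫⁻ y', D (Rob Upert (hy y')) ∂μ
        = ∫⁻ y', ∫⁻ x, W.indicator 1 (y', x) ∂D ∂μ := by
          refine lintegral_congr fun y' => ?_
          have h1 : ∀ x : Xsp, W.indicator (1 : ((ℕ → ℤˣ) × Xsp) → ENNReal) (y', x)
              = (Rob Upert (hy y')).indicator 1 x := by
            intro x; rfl
          rw [lintegral_congr h1, lintegral_indicator_one MeasurableSet.of_discrete]
      _ = ∫⁻ x, ∫⁻ y', W.indicator 1 (y', x) ∂μ ∂D :=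
          lintegral_lintegral_swap (measurable_one.indicator hWm).aemeasurable
      _ = ∫⁻ x, (if x.2 = SignType.zero then 0 else 2⁻¹) ∂D := by
          refine lintegral_congr fun x => ?_
          rw [lintegral_congr (fun y' => hind y' x), lintegral_indicator_one (hmslice x),
            hslice x]
      _ = 2⁻¹ * D {x : Xsp | ¬ x.2 = SignType.zero} := by
          rw [← lintegral_indicator_const MeasurableSet.of_discrete]
          refine lintegral_congr fun x => ?_
          simp only [Set.indicator_apply, Set.mem_setOf_eq]
          by_cases h : x.2 = SignType.zero <;> simp [h]
      _ = 1 / 2 := by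
          have hc : {x : Xsp | ¬ x.2 = SignType.zero} = {x : Xsp | x.2 = SignType.zero}ᶜ := rfl
          rw [hc, prob_compl_eq_one_sub MeasurableSet.of_discrete, hzero, tsub_zero, mul_one,
            one_div]

/-! ### Part (b) infrastructure -/

lemma units_ne_neg (u : ℤˣ) : u ≠ -u := by
  rcases Int.units_eq_one_or u with rfl | rfl <;> decide

def yv (k : ℕ) (v : Fin k → ℤˣ) : ℕ → ℤˣ := fun n => if h : n < k then v ⟨n, h⟩ else 1

lemma yv_coe {k : ℕ} (v : Fin k → ℤˣ) (i : Fin k) : yv k v (i : ℕ) = v i := by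
  simp [yv, i.isLt]

/-- The uniform measure on the image of `f : Fin k → α`. -/
noncomputable def unif {α : Type*} [MeasurableSpace α] (k : ℕ) (f : Fin k → α) : Measure α :=
  (k : ENNReal)⁻¹ • ∑ i : Fin k, Measure.dirac (f i)

lemma unif_apply {α : Type*} [MeasurableSpace α] [MeasurableSingletonClass α]
    (k : ℕ) (f : Fin k → α) (s : Set α) [DecidablePred (fun i => f i ∈ s)] :
    unif k f s = (k : ENNReal)⁻¹ * (Finset.univ.filter (fun i => f i ∈ s)).card := by
  rw [unif, Measure.smul_apply, Measure.finset_sum_apply, smul_eq_mul]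
  congr 1
  rw [← Finset.sum_boole]
  refine Finset.sum_congr rfl fun i _ => ?_
  rw [Measure.dirac_apply, Set.indicator_apply]
  by_cases h : f i ∈ s <;> simp [h]

lemma unif_prob {α : Type*} [MeasurableSpace α] [MeasurableSingletonClass α]
    {k : ℕ} (hk : 0 < k) (f : Fin k → α) : IsProbabilityMeasure (unif k f) := by
  classical
  constructor
  rw [unif_apply]
  simp only [Set.mem_univ, Finset.filter_true, Finset.card_univ, Fintype.card_fin]
  exact ENNReal.inv_mul_cancel (by exact_mod_cast hk.ne') (ENNReal.natCast_ne_top k)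

lemma unif_map {α β : Type*} [MeasurableSpace α] [MeasurableSingletonClass α]
    [MeasurableSpace β] [MeasurableSingletonClass β]
    (k : ℕ) (f : Fin k → α) (g : α → β) (hg : Measurable g) :
    (unif k f).map g = unif k (g ∘ f) := by
  classical
  refine Measure.ext fun s hs => ?_
  rw [Measure.map_apply hg hs, unif_apply, unif_apply]
  rfl

noncomputable def Dv (k : ℕ) (v : Fin k → ℤˣ) : Measure Xsp := unif k (fun i : Fin k => xpt (i : ℕ) (v i))

noncomputable def Pmeas (k : ℕ) : Measure ℕ := unif k (fun i : Fin k => (i : ℕ))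

def phiv (k : ℕ) (v : Fin k → ℤˣ) : ℕ → Xsp := fun n => xpt n (yv k v n)

lemma Dv_prob {k : ℕ} (hk : 0 < k) (v : Fin k → ℤˣ) : IsProbabilityMeasure (Dv k v) :=
  unif_prob hk _

lemma Pmeas_prob {k : ℕ} (hk : 0 < k) : IsProbabilityMeasure (Pmeas k) :=
  unif_prob hk _

lemma map_phiv (k : ℕ) (v : Fin k → ℤˣ) : (Pmeas k).map (phiv k v) = Dv k v := by
  rw [Pmeas, unif_map _ _ _ Measurable.of_discrete, Dv]
  congr 1
  funext i
  simp only [Function.comp_apply, phiv, yv_coe]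

lemma xpt_not_bad (y : ℕ → ℤˣ) (n : ℕ) (u : ℤˣ) (h : y n = u) :
    xpt n u ∉ {x : Xsp | ∃ z ∈ Upert x, hy y z ≠ hy y x} := by
  rintro ⟨z, hz, hne⟩
  rcases Int.units_eq_one_or u with rfl | rfl
  · rw [show xpt n 1 = xp n from rfl] at hz hne
    simp only [Upert_xp, Set.mem_insert_iff, Set.mem_singleton_iff] at hz
    rcases hz with rfl | rfl
    · exact hne rfl
    · exact hne (by simp [h])
  · rw [show xpt n (-1) = xm n from by simp [xpt]] at hz hne
    simp only [Upert_xm, Set.mem_insert_iff, Set.mem_singleton_iff] at hz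
    rcases hz with rfl | rfl
    · exact hne rfl
    · exact hne (by simp [h])

lemma Dv_realizable {k : ℕ} (v : Fin k → ℤˣ) :
    Dv k v {x | ∃ z ∈ Upert x, hy (yv k v) z ≠ hy (yv k v) x} = 0 := by
  classical
  rw [Dv, unif_apply]
  have : (Finset.univ.filter
      (fun i : Fin k => xpt (i : ℕ) (v i) ∈ {x | ∃ z ∈ Upert x, hy (yv k v) z ≠ hy (yv k v) x}))
      = ∅ := by
    refine Finset.filter_false_of_mem fun i _ => ?_
    exact xpt_not_bad (yv k v) i (v i) (yv_coe v i)
  rw [this]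
  simp

lemma main_count (ε : ℝ) (m k : ℕ) (hmk : m < k)
    (hth : ∀ c : ℕ, k ≤ 2 * c + m → ENNReal.ofReal ε < (k : ENNReal)⁻¹ * c)
    (B : (Fin m → Xsp × ℤˣ) → Xsp → ℤˣ) (ns : Fin m → ℕ) :
    (Fintype.card (Fin k → ℤˣ) : ENNReal) ≤ 2 * ∑ v : Fin k → ℤˣ,
      ({ns' : Fin m → ℕ | ENNReal.ofReal ε < Dv k v
        {x | ∃ z ∈ Upert x, B (fun j => (xpt (ns' j) (yv k v (ns' j)),
          hy (yv k v) (xpt (ns' j) (yv k v (ns' j))))) z ≠ hy (yv k v) x}}).indicator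
        (1 : (Fin m → ℕ) → ENNReal) ns := by
  classical
  set J : Finset (Fin k) := Finset.univ.filter (fun i => ∃ j, ns j = (i : ℕ)) with hJ
  have hJcard : J.card ≤ m := by
    have h0 : 0 < k := lt_of_le_of_lt (Nat.zero_le m) hmk
    have hsub : J ⊆ Finset.image
        (fun j : Fin m => if h : ns j < k then (⟨ns j, h⟩ : Fin k) else ⟨0, h0⟩)
        Finset.univ := by
      intro i hi
      simp only [hJ, Finset.mem_filter] at hi
      obtain ⟨-, j, hj⟩ := hi
      refine Finset.mem_image.mpr ⟨j, Finset.mem_univ _, ?_⟩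
      have hlt : ns j < k := hj ▸ i.isLt
      rw [dif_pos hlt]
      exact Fin.ext hj
    calc J.card ≤ _ := Finset.card_le_card hsub
      _ ≤ Finset.univ.card := Finset.card_image_le
      _ = m := by simp
  set σ : (Fin k → ℤˣ) → (Fin k → ℤˣ) := fun v i => if i ∈ J then v i else -(v i) with hσ
  have hσσ : ∀ v, σ (σ v) = v := by
    intro v; funext i; by_cases h : i ∈ J <;> simp [hσ, h]
  have hyveq : ∀ (v : Fin k → ℤˣ) (j : Fin m), yv k (σ v) (ns j) = yv k v (ns j) := by
    intro v j
    by_cases h : ns j < k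
    · have hmem : (⟨ns j, h⟩ : Fin k) ∈ J := by
        simp only [hJ, Finset.mem_filter, Finset.mem_univ, true_and]
        exact ⟨j, rfl⟩
      simp [yv, h, hσ, hmem]
    · simp [yv, h]
  -- the trained classifier
  set hat : (Fin k → ℤˣ) → Xsp → ℤˣ := fun v => B (fun j => (xpt (ns j) (yv k v (ns j)),
    hy (yv k v) (xpt (ns j) (yv k v (ns j))))) with hhat
  have hhatσ : ∀ v, hat (σ v) = hat v := by
    intro v
    have hs : (fun j => (xpt (ns j) (yv k (σ v) (ns j)),
        hy (yv k (σ v)) (xpt (ns j) (yv k (σ v) (ns j)))))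
        = (fun j => (xpt (ns j) (yv k v (ns j)),
          hy (yv k v) (xpt (ns j) (yv k v (ns j))))) := by
      funext j
      rw [hy_xpt, hy_xpt, hyveq]
    simp only [hhat]
    rw [hs]
  set cnt : (Fin k → ℤˣ) → ℕ :=
    fun v => (Finset.univ.filter (fun i : Fin k => hat v (zz (i : ℕ)) ≠ v i)).card with hcnt
  have hA : ∀ v : Fin k → ℤˣ, k ≤ 2 * cnt v + m →
      ENNReal.ofReal ε < Dv k v
        {x | ∃ z ∈ Upert x, hat v z ≠ hy (yv k v) x} := by
    intro v hv
    have hsub : Finset.univ.filter (fun i : Fin k => hat v (zz (i : ℕ)) ≠ v i) ⊆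
        Finset.univ.filter (fun i : Fin k =>
          xpt (i : ℕ) (v i) ∈ {x : Xsp | ∃ z ∈ Upert x, hat v z ≠ hy (yv k v) x}) := by
      intro i hi
      simp only [Finset.mem_filter, Finset.mem_univ, true_and] at hi ⊢
      refine ⟨zz (i : ℕ), ?_, ?_⟩
      · rcases Int.units_eq_one_or (v i) with h | h <;> simp [xpt, h]
      · rw [hy_xpt]; exact hi
    refine lt_of_lt_of_le (hth (cnt v) hv) ?_
    rw [Dv, unif_apply]
    exact mul_le_mul_right (Nat.cast_le.mpr (Finset.card_le_card hsub)) _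
  have hBsum : ∀ v : Fin k → ℤˣ, k ≤ cnt v + cnt (σ v) + m := by
    intro v
    have hsub : Finset.univ.filter (fun i : Fin k => i ∉ J) ⊆
        (Finset.univ.filter (fun i : Fin k => hat v (zz (i : ℕ)) ≠ v i)) ∪
        (Finset.univ.filter (fun i : Fin k => hat (σ v) (zz (i : ℕ)) ≠ σ v i)) := by
      intro i hi
      simp only [Finset.mem_filter, Finset.mem_union, Finset.mem_univ, true_and] at hi ⊢
      rw [hhatσ]
      have hσi : σ v i = -(v i) := by simp [hσ, hi]
      rw [hσi]
      by_cases he : hat v (zz (i : ℕ)) = v i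
      · exact Or.inr (by rw [he]; exact units_ne_neg _)
      · exact Or.inl he
    have hceq : (Finset.univ.filter (fun i : Fin k => i ∉ J)) = Jᶜ := by
      ext i; simp
    have hcard : k - J.card ≤ cnt v + cnt (σ v) := by
      calc k - J.card = (Finset.univ.filter (fun i : Fin k => i ∉ J)).card := by
            rw [hceq, Finset.card_compl, Fintype.card_fin]
        _ ≤ _ := Finset.card_le_card hsub
        _ ≤ cnt v + cnt (σ v) := Finset.card_union_le _ _
    omega
  set Good : Finset (Fin k → ℤˣ) := Finset.univ.filter (fun v =>
    ENNReal.ofReal ε < Dv k v {x | ∃ z ∈ Upert x, hat v z ≠ hy (yv k v) x}) with hGood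
  have hmemG : ∀ v : Fin k → ℤˣ, v ∉ Good → σ v ∈ Good := by
    intro v hv
    have hnp : ¬ (ENNReal.ofReal ε < Dv k v
        {x | ∃ z ∈ Upert x, hat v z ≠ hy (yv k v) x}) := by
      intro h
      exact hv (by simp only [hGood, Finset.mem_filter, Finset.mem_univ, true_and]; exact h)
    have h1 : ¬ (k ≤ 2 * cnt v + m) := fun h => hnp (hA v h)
    have h2 : k ≤ 2 * cnt (σ v) + m := by have := hBsum v; omega
    simp only [hGood, Finset.mem_filter, Finset.mem_univ, true_and]
    exact hA (σ v) h2
  have hinj : Function.Injective σ := Function.LeftInverse.injective hσσ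
  have hcard2 : (Finset.univ \ Good).card ≤ Good.card := by
    refine Finset.card_le_card_of_injOn σ ?_ hinj.injOn
    intro v hv
    exact hmemG v (Finset.mem_sdiff.mp hv).2
  have hcg : Good.card ≤ Finset.univ.card := Finset.card_le_card (Finset.subset_univ _)
  have hsd : (Finset.univ \ Good).card = Finset.univ.card - Good.card :=
    Finset.card_sdiff_of_subset (Finset.subset_univ _)
  have hnat : Fintype.card (Fin k → ℤˣ) ≤ 2 * Good.card := by
    rw [← Finset.card_univ]
    omega
  have hGoodsum : (Good.card : ENNReal) ≤ ∑ v : Fin k → ℤˣ,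
      ({ns' : Fin m → ℕ | ENNReal.ofReal ε < Dv k v
        {x | ∃ z ∈ Upert x, B (fun j => (xpt (ns' j) (yv k v (ns' j)),
          hy (yv k v) (xpt (ns' j) (yv k v (ns' j))))) z ≠ hy (yv k v) x}}).indicator
        (1 : (Fin m → ℕ) → ENNReal) ns := by
    calc (Good.card : ENNReal) = ∑ _v ∈ Good, 1 := by
          rw [Finset.sum_const, nsmul_eq_mul, mul_one]
      _ = ∑ v ∈ Good, ({ns' : Fin m → ℕ | ENNReal.ofReal ε < Dv k v
          {x | ∃ z ∈ Upert x, B (fun j => (xpt (ns' j) (yv k v (ns' j)),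
            hy (yv k v) (xpt (ns' j) (yv k v (ns' j))))) z ≠ hy (yv k v) x}}).indicator
          (1 : (Fin m → ℕ) → ENNReal) ns := by
          refine Finset.sum_congr rfl fun v hv => ?_
          refine (Set.indicator_of_mem ?_ (1 : (Fin m → ℕ) → ENNReal)).symm
          simp only [hGood, Finset.mem_filter, Finset.mem_univ, true_and, hhat] at hv
          exact hv
      _ ≤ _ := Finset.sum_le_sum_of_subset (Finset.subset_univ _)
  calc (Fintype.card (Fin k → ℤˣ) : ENNReal) ≤ 2 * (Good.card : ENNReal) := by
        exact_mod_cast hnat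
    _ ≤ _ := mul_le_mul_right hGoodsum 2

/-- **Theorem 8** (hard construction): the class `C = {h_y}` over `X = ℕ × {−1,0,+1}` is
barely robustly learnable w.r.t. `U` with `β = 1/2` and zero natural error — a uniformly
random `h_y'` makes no natural errors and is robust on half the mass in expectation — but is
not `(ε,δ)`-robustly-learnable w.r.t. `U` for any `ε < 1/2`. Here `μ` is the i.i.d. uniform
product measure on `{−1,+1}^ℕ`, characterized by its cylinder probabilities. -/
theorem barely_robust_not_strongly_robust
    (μ : Measure (ℕ → ℤˣ)) (hμprob : IsProbabilityMeasure μ)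
    (hμ : ∀ (s : Finset ℕ) (v : ℕ → ℤˣ),
      μ {y' | ∀ n ∈ s, y' n = v n} = (2 : ENNReal)⁻¹ ^ s.card) :
    -- (a) barely robust learnability with zero natural error, in expectation over y' ~ μ
    (∀ y : ℕ → ℤˣ, ∀ D : Measure Xsp, IsProbabilityMeasure D →
      D {x | ∃ z ∈ Upert x, hy y z ≠ hy y x} = 0 →
      (∀ y' : ℕ → ℤˣ, D {x | hy y' x ≠ hy y x} = 0) ∧
      ∫⁻ y', D (Rob Upert (hy y')) ∂μ = 1 / 2) ∧
    -- (b) no learner (ε,δ)-robustly-learns the class for ε < 1/2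
    (∀ ε δ : ℝ, 0 < ε → ε < 1 / 2 → 0 < δ → δ < 1 / 2 →
      ∀ (m : ℕ) (B : (Fin m → Xsp × ℤˣ) → Xsp → ℤˣ),
        ∃ y : ℕ → ℤˣ, ∃ D : Measure Xsp, IsProbabilityMeasure D ∧
          D {x | ∃ z ∈ Upert x, hy y z ≠ hy y x} = 0 ∧
          ENNReal.ofReal δ <
            Measure.pi (fun _ : Fin m => D)
              {xs | ENNReal.ofReal ε <
                D {x | ∃ z ∈ Upert x, B (fun i => (xs i, hy y (xs i))) z ≠ hy y x}}) := by
  haveI := hμprob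
  constructor
  · intro y D hD hreal
    haveI := hD
    exact partA μ hμ y D hreal
  · intro ε δ hε hε2 hδ hδ2 m B
    classical
    obtain ⟨k, hkgt⟩ := exists_nat_gt ((m : ℝ) / (1 - 2 * ε))
    have h2ε : 0 < 1 - 2 * ε := by linarith
    have hm1 : (m : ℝ) < k * (1 - 2 * ε) := by
      rw [div_lt_iff₀ h2ε] at hkgt; linarith
    have hmk : m < k := by
      have h1 : (m : ℝ) < k := by nlinarith [Nat.cast_nonneg (α := ℝ) k]
      exact_mod_cast h1
    have hk0 : 0 < k := lt_of_le_of_lt (Nat.zero_le m) hmk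
    have hk0' : (0 : ℝ) < k := by exact_mod_cast hk0
    have hth : ∀ c : ℕ, k ≤ 2 * c + m → ENNReal.ofReal ε < (k : ENNReal)⁻¹ * c := by
      intro c hc
      have hcr : (k : ℝ) ≤ 2 * c + m := by exact_mod_cast hc
      have hεc : ε * k < c := by nlinarith
      have hc0 : (0 : ℝ) < c := lt_of_le_of_lt (by positivity) hεc
      have hdiv : ε < (c : ℝ) / k := by rw [lt_div_iff₀ hk0']; linarith
      have h1 : ENNReal.ofReal ε < ENNReal.ofReal ((c : ℝ) / k) :=
        (ENNReal.ofReal_lt_ofReal_iff (div_pos hc0 hk0')).mpr hdiv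
      rwa [ENNReal.ofReal_div_of_pos hk0', ENNReal.ofReal_natCast, ENNReal.ofReal_natCast,
        div_eq_mul_inv, mul_comm] at h1
    haveI hPp : IsProbabilityMeasure (Pmeas k) := Pmeas_prob hk0
    -- pushforward identity
    have key : ∀ v : Fin k → ℤˣ,
        Measure.pi (fun _ : Fin m => Dv k v) {xs : Fin m → Xsp | ENNReal.ofReal ε <
          Dv k v {x | ∃ z ∈ Upert x, B (fun i => (xs i, hy (yv k v) (xs i))) z
            ≠ hy (yv k v) x}}
        = Measure.pi (fun _ : Fin m => Pmeas k)
          {ns' : Fin m → ℕ | ENNReal.ofReal ε < Dv k v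
            {x | ∃ z ∈ Upert x, B (fun j => (xpt (ns' j) (yv k v (ns' j)),
              hy (yv k v) (xpt (ns' j) (yv k v (ns' j))))) z ≠ hy (yv k v) x}} := by
      intro v
      haveI := Dv_prob hk0 v
      have hpres : MeasurePreserving (fun (a : Fin m → ℕ) (i : Fin m) => phiv k v (a i))
          (Measure.pi fun _ : Fin m => Pmeas k) (Measure.pi fun _ : Fin m => Dv k v) :=
        measurePreserving_pi _ _ (fun _ => ⟨Measurable.of_discrete, map_phiv k v⟩)
      have h1 := (hpres.measure_preimage
        (s := {xs : Fin m → Xsp | ENNReal.ofReal ε <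
          Dv k v {x | ∃ z ∈ Upert x, B (fun i => (xs i, hy (yv k v) (xs i))) z
            ≠ hy (yv k v) x}})
        MeasurableSet.of_discrete.nullMeasurableSet).symm
      rw [h1]
      rfl
    -- existence of a bad v by averaging
    have hpig : ∃ v : Fin k → ℤˣ, ENNReal.ofReal δ <
        Measure.pi (fun _ : Fin m => Dv k v) {xs : Fin m → Xsp | ENNReal.ofReal ε <
          Dv k v {x | ∃ z ∈ Upert x, B (fun i => (xs i, hy (yv k v) (xs i))) z
            ≠ hy (yv k v) x}} := by
      by_contra hcon
      push_neg at hcon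
      -- sum lower bound via main_count
      have hsum : (Fintype.card (Fin k → ℤˣ) : ENNReal) ≤ 2 * ∑ v : Fin k → ℤˣ,
          Measure.pi (fun _ : Fin m => Dv k v) {xs : Fin m → Xsp | ENNReal.ofReal ε <
            Dv k v {x | ∃ z ∈ Upert x, B (fun i => (xs i, hy (yv k v) (xs i))) z
              ≠ hy (yv k v) x}} := by
        have hmeas : ∀ v : Fin k → ℤˣ, Measurable
            (({ns' : Fin m → ℕ | ENNReal.ofReal ε < Dv k v
              {x | ∃ z ∈ Upert x, B (fun j => (xpt (ns' j) (yv k v (ns' j)),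
                hy (yv k v) (xpt (ns' j) (yv k v (ns' j))))) z ≠ hy (yv k v) x}}).indicator
              (1 : (Fin m → ℕ) → ENNReal)) :=
          fun v => measurable_one.indicator MeasurableSet.of_discrete
        calc (Fintype.card (Fin k → ℤˣ) : ENNReal)
            = ∫⁻ _ns, (Fintype.card (Fin k → ℤˣ) : ENNReal)
                ∂(Measure.pi fun _ : Fin m => Pmeas k) := by
              rw [lintegral_const, measure_univ, mul_one]
          _ ≤ ∫⁻ ns, 2 * ∑ v : Fin k → ℤˣ,
                ({ns' : Fin m → ℕ | ENNReal.ofReal ε < Dv k v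
                  {x | ∃ z ∈ Upert x, B (fun j => (xpt (ns' j) (yv k v (ns' j)),
                    hy (yv k v) (xpt (ns' j) (yv k v (ns' j))))) z ≠ hy (yv k v) x}}).indicator
                  (1 : (Fin m → ℕ) → ENNReal) ns
                ∂(Measure.pi fun _ : Fin m => Pmeas k) :=
              lintegral_mono fun ns => main_count ε m k hmk hth B ns
          _ = 2 * ∑ v : Fin k → ℤˣ, ∫⁻ ns,
                ({ns' : Fin m → ℕ | ENNReal.ofReal ε < Dv k v
                  {x | ∃ z ∈ Upert x, B (fun j => (xpt (ns' j) (yv k v (ns' j)),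
                    hy (yv k v) (xpt (ns' j) (yv k v (ns' j))))) z ≠ hy (yv k v) x}}).indicator
                  (1 : (Fin m → ℕ) → ENNReal) ns
                ∂(Measure.pi fun _ : Fin m => Pmeas k) := by
              rw [lintegral_const_mul 2 (Finset.measurable_sum _ (fun v _ => hmeas v)),
                lintegral_finset_sum _ (fun v _ => hmeas v)]
          _ = 2 * ∑ v : Fin k → ℤˣ,
              Measure.pi (fun _ : Fin m => Dv k v) {xs : Fin m → Xsp | ENNReal.ofReal ε <
                Dv k v {x | ∃ z ∈ Upert x, B (fun i => (xs i, hy (yv k v) (xs i))) z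
                  ≠ hy (yv k v) x}} := by
              congr 1
              refine Finset.sum_congr rfl fun v _ => ?_
              rw [lintegral_indicator_one MeasurableSet.of_discrete, ← key v]
      have hle : ∑ v : Fin k → ℤˣ,
          Measure.pi (fun _ : Fin m => Dv k v) {xs : Fin m → Xsp | ENNReal.ofReal ε <
            Dv k v {x | ∃ z ∈ Upert x, B (fun i => (xs i, hy (yv k v) (xs i))) z
              ≠ hy (yv k v) x}}
          ≤ ∑ _v : Fin k → ℤˣ, ENNReal.ofReal δ :=
        Finset.sum_le_sum fun v _ => hcon v
      rw [Finset.sum_const, Finset.card_univ, nsmul_eq_mul] at hle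
      have h2δ : 2 * ENNReal.ofReal δ < 1 := by
        rw [show (2 : ENNReal) = ENNReal.ofReal 2 by simp, ← ENNReal.ofReal_mul (by norm_num)]
        exact ENNReal.ofReal_lt_one.mpr (by linarith)
      have hcne : (Fintype.card (Fin k → ℤˣ) : ENNReal) ≠ 0 :=
        Nat.cast_ne_zero.mpr Fintype.card_ne_zero
      have hctop : (Fintype.card (Fin k → ℤˣ) : ENNReal) ≠ ⊤ := ENNReal.natCast_ne_top _
      have hfinal : (Fintype.card (Fin k → ℤˣ) : ENNReal)
          < (Fintype.card (Fin k → ℤˣ) : ENNReal) := by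
        calc (Fintype.card (Fin k → ℤˣ) : ENNReal)
            ≤ 2 * ∑ v : Fin k → ℤˣ,
              Measure.pi (fun _ : Fin m => Dv k v) {xs : Fin m → Xsp | ENNReal.ofReal ε <
                Dv k v {x | ∃ z ∈ Upert x, B (fun i => (xs i, hy (yv k v) (xs i))) z
                  ≠ hy (yv k v) x}} := hsum
          _ ≤ 2 * ((Fintype.card (Fin k → ℤˣ) : ENNReal) * ENNReal.ofReal δ) :=
              mul_le_mul_right hle 2
          _ = (Fintype.card (Fin k → ℤˣ) : ENNReal) * (2 * ENNReal.ofReal δ) := by ring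
          _ < (Fintype.card (Fin k → ℤˣ) : ENNReal) * 1 :=
              (ENNReal.mul_lt_mul_iff_right hcne hctop).mpr h2δ
          _ = _ := mul_one _
      exact absurd hfinal (lt_irrefl _)
    obtain ⟨v, hv⟩ := hpig
    exact ⟨yv k v, Dv k v, Dv_prob hk0 v, Dv_realizable v, hv⟩
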